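/- arXiv:1610.05277 — 8 statements merged into one kernel-verified Lean document; each statement's English description precedes it below -/
import Mathlib

section
/- The map π: ℂP³ → S⁴ ⊂ ℝ⁵ given by π([z₁,z₂,z₃,z₄]) = (2(z̄₁z₃+z₂z̄₄), 2(z̄₁z₄−z₂z̄₃), |z₁|²+|z₂|²−|z₃|²−|z₄|²)/(|z₁|²+|z₂|²+|z₃|²+|z₄|²) is well defined (independent of the choice of homogeneous coordinates) and its image lies in the unit sphere S⁴ ⊂ ℝ⁵ ≅ ℂ×ℂ×ℝ. -/
open Complex

/-- The twistor projection `π : ℂP³ → ℝ⁵ ≅ ℂ × ℂ × ℝ`, written on homogeneous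
coordinates, i.e. on nonzero vectors of `ℂ⁴`. -/
noncomputable def twistorPi (z : Fin 4 → ℂ) : ℂ × ℂ × ℝ :=
  let N : ℝ := ‖z 0‖ ^ 2 + ‖z 1‖ ^ 2 +
    ‖z 2‖ ^ 2 + ‖z 3‖ ^ 2
  ((2 * ((starRingEnd ℂ) (z 0) * z 2 + z 1 * (starRingEnd ℂ) (z 3))) / (N : ℂ),
   (2 * ((starRingEnd ℂ) (z 0) * z 3 - z 1 * (starRingEnd ℂ) (z 2))) / (N : ℂ),
   (‖z 0‖ ^ 2 + ‖z 1‖ ^ 2 -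
     ‖z 2‖ ^ 2 - ‖z 3‖ ^ 2) / N)

/-- The twistor projection is well defined on `ℂP³` (independent of the choice of
homogeneous coordinates) and its image lies in the unit sphere of `ℝ⁵ ≅ ℂ × ℂ × ℝ`. -/
theorem twistorPi_wellDefined_and_mem_sphere (z : Fin 4 → ℂ) (hz : z ≠ 0) :
    (∀ c : ℂ, c ≠ 0 → twistorPi (c • z) = twistorPi z) ∧
    ‖(twistorPi z).1‖ ^ 2 + ‖(twistorPi z).2.1‖ ^ 2 +
      (twistorPi z).2.2 ^ 2 = 1 := by
  have hN : ‖z 0‖ ^ 2 + ‖z 1‖ ^ 2 +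
      ‖z 2‖ ^ 2 + ‖z 3‖ ^ 2 ≠ 0 := by
    intro h
    have e : ∀ j : Fin 4, z j = 0 := by
      have nn := fun j => norm_nonneg (z j)
      have e0 : ‖z 0‖ = 0 := by nlinarith [nn 0, nn 1, nn 2, nn 3]
      have e1 : ‖z 1‖ = 0 := by nlinarith [nn 0, nn 1, nn 2, nn 3]
      have e2 : ‖z 2‖ = 0 := by nlinarith [nn 0, nn 1, nn 2, nn 3]
      have e3 : ‖z 3‖ = 0 := by nlinarith [nn 0, nn 1, nn 2, nn 3]
      intro j
      fin_cases j <;> rw [← norm_eq_zero] <;>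
        first | exact e0 | exact e1 | exact e2 | exact e3
    exact hz (funext e)
  have hNC : ((‖z 0‖ ^ 2 + ‖z 1‖ ^ 2 +
      ‖z 2‖ ^ 2 + ‖z 3‖ ^ 2 : ℝ) : ℂ) ≠ 0 :=
    Complex.ofReal_ne_zero.mpr hN
  constructor
  · intro c hc
    have habs : ‖c‖ ≠ 0 := norm_ne_zero_iff.mpr hc
    have hc2 : (‖c‖ ^ 2 : ℝ) ≠ 0 := pow_ne_zero 2 habs
    have hcc : ((‖c‖ ^ 2 : ℝ) : ℂ) = (starRingEnd ℂ) c * c := by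
      rw [Complex.sq_norm]; exact Complex.normSq_eq_conj_mul_self
    have hA : (‖c‖ * ‖z 0‖) ^ 2 +
        (‖c‖ * ‖z 1‖) ^ 2 +
        (‖c‖ * ‖z 2‖) ^ 2 +
        (‖c‖ * ‖z 3‖) ^ 2 =
        ‖c‖ ^ 2 * (‖z 0‖ ^ 2 + ‖z 1‖ ^ 2 +
        ‖z 2‖ ^ 2 + ‖z 3‖ ^ 2) := by
      ring
    simp only [twistorPi, Pi.smul_apply, smul_eq_mul, map_mul, norm_mul, hA, Prod.mk.injEq,
      Complex.ofReal_mul]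
    have hd : (starRingEnd ℂ) c * c ≠ 0 := by
      rw [← hcc]; exact Complex.ofReal_ne_zero.mpr hc2
    refine ⟨?_, ?_, ?_⟩
    · rw [hcc, div_eq_div_iff (mul_ne_zero hd hNC) hNC]
      ring
    · rw [hcc, div_eq_div_iff (mul_ne_zero hd hNC) hNC]
      ring
    · rw [div_eq_div_iff (mul_ne_zero hc2 hN) hN]
      ring
  · have hN0 : (0 : ℝ) ≤ ‖z 0‖ ^ 2 + ‖z 1‖ ^ 2 +
        ‖z 2‖ ^ 2 + ‖z 3‖ ^ 2 := by positivity
    simp only [twistorPi]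
    rw [norm_div, norm_div, Complex.norm_real, Real.norm_of_nonneg hN0, div_pow, div_pow,
      div_pow, ← add_div, ← add_div, div_eq_one_iff_eq (pow_ne_zero 2 hN)]
    simp only [Complex.sq_norm]
    simp only [Complex.normSq_apply, Complex.mul_re, Complex.mul_im, Complex.add_re,
      Complex.add_im, Complex.sub_re, Complex.sub_im, Complex.conj_re, Complex.conj_im,
      Complex.ofReal_re, Complex.ofReal_im, Complex.re_ofNat, Complex.im_ofNat]
    ring
end

section
/- If the 4×4 complex matrix A satisfies AᵗJA = J (with J as below) and A fixes the vector (1,0,0,0)ᵗ, and additionally A is unitary, then A has the form with first two columns (1,0,0,0)ᵗ, (0,1,0,0)ᵗ and bottom-right 2×2 block [[v₁,−conj(v₂)],[v₂,conj(v₁)]] with |v₁|²+|v₂|²=1, and zeros elsewhere below the first row. -/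
open Complex Matrix

/-- The matrix `J`, block diagonal with blocks `[[0,-1],[1,0]]`. -/
def Jmat : Matrix (Fin 4) (Fin 4) ℂ :=
  !![0, -1, 0, 0; 1, 0, 0, 0; 0, 0, 0, -1; 0, 0, 1, 0]

/-- A unitary matrix `A` with `AᵗJA = J` fixing `(1,0,0,0)ᵗ` has first two columns
`(1,0,0,0)ᵗ, (0,1,0,0)ᵗ`, bottom-right `2×2` block `[[v₁,−v̄₂],[v₂,v̄₁]]` with
`|v₁|² + |v₂|² = 1`, and zeros elsewhere below the first row. -/
theorem sp2_stabilizer_form (A : Matrix (Fin 4) (Fin 4) ℂ)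
    (hsymp : Aᵀ * Jmat * A = Jmat)
    (hfix : A.mulVec (fun i => if i = 0 then 1 else 0) = fun i => if i = 0 then 1 else 0)
    (hunit : A ∈ Matrix.unitaryGroup (Fin 4) ℂ) :
    ∃ v₁ v₂ : ℂ, ‖v₁‖ ^ 2 + ‖v₂‖ ^ 2 = 1 ∧
      A 0 0 = 1 ∧ A 1 0 = 0 ∧ A 2 0 = 0 ∧ A 3 0 = 0 ∧
      A 0 1 = 0 ∧ A 1 1 = 1 ∧ A 2 1 = 0 ∧ A 3 1 = 0 ∧
      A 1 2 = 0 ∧ A 1 3 = 0 ∧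
      A 2 2 = v₁ ∧ A 2 3 = -(starRingEnd ℂ) v₂ ∧
      A 3 2 = v₂ ∧ A 3 3 = (starRingEnd ℂ) v₁ := by
  have h00 := congr_fun hfix 0
  have h10 := congr_fun hfix 1
  have h20 := congr_fun hfix 2
  have h30 := congr_fun hfix 3
  simp [mulVec, dotProduct, Fin.sum_univ_four] at h00 h10 h20 h30
  have hs11 := congr_fun (congr_fun hsymp 0) 1
  have hs12 := congr_fun (congr_fun hsymp 0) 2
  have hs13 := congr_fun (congr_fun hsymp 0) 3
  simp [Jmat, Matrix.mul_apply, Fin.sum_univ_four, h00, h10, h20, h30] at hs11 hs12 hs13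
  have hU : star A * A = 1 := Matrix.mem_unitaryGroup_iff'.mp hunit
  have hu01 := congr_fun (congr_fun hU 0) 1
  have hu02 := congr_fun (congr_fun hU 0) 2
  have hu03 := congr_fun (congr_fun hU 0) 3
  simp [Matrix.mul_apply, Fin.sum_univ_four, Matrix.one_apply, h00, h10, h20, h30] at hu01 hu02 hu03
  have hV : A * star A = 1 := Matrix.mem_unitaryGroup_iff.mp hunit
  have hv21 := congr_fun (congr_fun hV 2) 1
  have hv31 := congr_fun (congr_fun hV 3) 1
  simp [Matrix.mul_apply, Fin.sum_univ_four, Matrix.one_apply, h10, hs11, hs12, hs13] at hv21 hv31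
  have h1 := congr_fun (congr_fun hU 2) 2
  have h2 := congr_fun (congr_fun hU 2) 3
  simp [Matrix.mul_apply, Fin.sum_univ_four, Matrix.one_apply, h20, h30, hu02, hu03, hs12, hs13] at h1 h2
  have h4 := congr_fun (congr_fun hsymp 2) 3
  simp [Jmat, Matrix.mul_apply, Fin.sum_univ_four, hu02, hu03, hs12, hs13] at h4
  refine ⟨A 2 2, A 3 2, ?_, h00, h10, h20, h30, hu01, hs11, hv21, hv31, hs12, hs13, rfl, ?_, rfl, ?_⟩
  · rw [Complex.sq_norm, Complex.sq_norm]
    have h1' : ((Complex.normSq (A 2 2) : ℂ)) + (Complex.normSq (A 3 2) : ℂ) = 1 := by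
      rw [← Complex.mul_conj, ← Complex.mul_conj]; linear_combination h1
    exact_mod_cast h1'
  · linear_combination (-(A 2 3)) * h1 + A 2 2 * h2 + (starRingEnd ℂ) (A 3 2) * h4
  · linear_combination (-(A 3 3)) * h1 + A 3 2 * h2 - (starRingEnd ℂ) (A 2 2) * h4
end

section
/- For real parameters η, q, μ with q = (η/√3)·√((η²+5)/(η²+4)) and μ = (2/√3)·√((η²+5)/(η²+4)), the curve Ψ⁵_η(z) = (1+qz, −qz⁴+z⁵, μz+ηz², ηz³−μz⁴) satisfies the horizontality condition f₁′f₂ − f₁f₂′ + f₃′f₄ − f₃f₄′ = 0 identically. -/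
open Polynomial

/-- For `q = (η/√3)·√((η²+5)/(η²+4))` and `μ = (2/√3)·√((η²+5)/(η²+4))`, the curve
`Ψ⁵_η(z) = (1+qz, −qz⁴+z⁵, μz+ηz², ηz³−μz⁴)` satisfies the horizontality condition
identically. -/
theorem Psi5_horizontal (η q μ : ℝ)
    (hq : q = η / Real.sqrt 3 * Real.sqrt ((η ^ 2 + 5) / (η ^ 2 + 4)))
    (hμ : μ = 2 / Real.sqrt 3 * Real.sqrt ((η ^ 2 + 5) / (η ^ 2 + 4))) :
    letI f : Fin 4 → Polynomial ℂ :=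
      ![1 + C (q : ℂ) * X,
        -(C (q : ℂ) * X ^ 4) + X ^ 5,
        C (μ : ℂ) * X + C (η : ℂ) * X ^ 2,
        C (η : ℂ) * X ^ 3 - C (μ : ℂ) * X ^ 4]
    derivative (f 0) * f 1 - f 0 * derivative (f 1) +
      derivative (f 2) * f 3 - f 2 * derivative (f 3) = 0 := by
  have h4 : (0:ℝ) < η ^ 2 + 4 := by positivity
  have hs : Real.sqrt ((η ^ 2 + 5) / (η ^ 2 + 4)) ^ 2 = (η ^ 2 + 5) / (η ^ 2 + 4) :=
    Real.sq_sqrt (by positivity)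
  have h3 : Real.sqrt 3 ^ 2 = 3 := Real.sq_sqrt (by norm_num)
  have h3' : Real.sqrt 3 ≠ 0 := by positivity
  have h1 : μ * η = 2 * q := by rw [hq, hμ]; ring
  have hq2 : q ^ 2 = η ^ 2 / 3 * ((η ^ 2 + 5) / (η ^ 2 + 4)) := by
    rw [hq, mul_pow, div_pow, h3, hs]
  have hμ2 : μ ^ 2 = 4 / 3 * ((η ^ 2 + 5) / (η ^ 2 + 4)) := by
    rw [hμ, mul_pow, div_pow, h3, hs]; norm_num
  have h2 : 3 * q ^ 2 + 3 * μ ^ 2 = η ^ 2 + 5 := by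
    rw [hq2, hμ2]; field_simp
  have h1c : (μ : ℂ) * η = 2 * q := by exact_mod_cast h1
  have h2c : 3 * (q : ℂ) ^ 2 + 3 * (μ : ℂ) ^ 2 = (η : ℂ) ^ 2 + 5 := by exact_mod_cast h2
  have e1 : C (μ : ℂ) * C (η : ℂ) = 2 * C (q : ℂ) := by
    rw [← C_mul, h1c, C_mul, map_ofNat]
  have e2 : 3 * C (q : ℂ) ^ 2 + 3 * C (μ : ℂ) ^ 2 = C (η : ℂ) ^ 2 + 5 := by
    have := congrArg C h2c
    rw [map_add, map_add, map_mul, map_mul, map_pow, map_pow, map_pow, map_ofNat, map_ofNat] at this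
    exact this
  simp only [Matrix.cons_val_zero, Matrix.cons_val_one, Matrix.head_cons, Fin.isValue,
    Matrix.cons_val_two, Matrix.tail_cons, Matrix.cons_val_three, Matrix.head_fin_const]
  simp only [derivative_add, derivative_sub, derivative_neg, derivative_mul, derivative_C,
    derivative_X_pow, derivative_X, derivative_one]
  simp only [map_natCast, map_ofNat]
  push_cast
  linear_combination (-2 * (X : Polynomial ℂ) ^ 3 + 2 * X ^ 5) * e1 + (X : Polynomial ℂ) ^ 4 * e2
end

section
/- The real solutions (μ, q, η) of the system 2q − ημ = 0 and −3q² + 5 − 3μ² + η² = 0 are exactly μ = ±(2/√3)√((η²+5)/(η²+4)), q = ±(η/√3)√((η²+5)/(η²+4)) (with matching signs), for η ∈ ℝ. -/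
/-- The real solutions of the system `2q − ημ = 0`, `−3q² + 5 − 3μ² + η² = 0` are
exactly `μ = ±(2/√3)√((η²+5)/(η²+4))`, `q = ±(η/√3)√((η²+5)/(η²+4))` with matching
signs, for `η ∈ ℝ`. -/
theorem horizontality_system_solutions (μ q η : ℝ) :
    (2 * q - η * μ = 0 ∧ -3 * q ^ 2 + 5 - 3 * μ ^ 2 + η ^ 2 = 0) ↔
    ((μ = 2 / Real.sqrt 3 * Real.sqrt ((η ^ 2 + 5) / (η ^ 2 + 4)) ∧
        q = η / Real.sqrt 3 * Real.sqrt ((η ^ 2 + 5) / (η ^ 2 + 4))) ∨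
      (μ = -(2 / Real.sqrt 3 * Real.sqrt ((η ^ 2 + 5) / (η ^ 2 + 4))) ∧
        q = -(η / Real.sqrt 3 * Real.sqrt ((η ^ 2 + 5) / (η ^ 2 + 4))))) := by
  have h4 : (0:ℝ) < η ^ 2 + 4 := by positivity
  set s := Real.sqrt ((η ^ 2 + 5) / (η ^ 2 + 4)) with hsdef
  have hs : s ^ 2 = (η ^ 2 + 5) / (η ^ 2 + 4) := Real.sq_sqrt (by positivity)
  have hseq : s ^ 2 * (η ^ 2 + 4) = η ^ 2 + 5 := by
    rw [hs]; field_simp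
  have h3 : Real.sqrt 3 ^ 2 = 3 := Real.sq_sqrt (by norm_num)
  have h3pos : (0:ℝ) < Real.sqrt 3 := Real.sqrt_pos.mpr (by norm_num)
  constructor
  · rintro ⟨h1, h2⟩
    have hq : q = η * μ / 2 := by linarith
    have h2' : -3 * (η * μ / 2) ^ 2 + 5 - 3 * μ ^ 2 + η ^ 2 = 0 := by rw [hq] at h2; exact h2
    have hμ2 : (μ - 2 / Real.sqrt 3 * s) * (μ + 2 / Real.sqrt 3 * s) = 0 := by
      have hμsq : μ ^ 2 = (2 / Real.sqrt 3 * s) ^ 2 := by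
        rw [mul_pow, div_pow, h3]
        have hkey : μ ^ 2 * 3 * (η ^ 2 + 4) = 2 ^ 2 * s ^ 2 * (η ^ 2 + 4) := by
          linear_combination (-4) * h2' + (-4) * hseq
        have := mul_right_cancel₀ (ne_of_gt h4) hkey
        field_simp
        linarith
      nlinarith [hμsq]
    rcases mul_eq_zero.mp hμ2 with h | h
    · left
      have hμ : μ = 2 / Real.sqrt 3 * s := by linarith
      refine ⟨hμ, ?_⟩
      rw [hq, hμ]; field_simp
    · right
      have hμ : μ = -(2 / Real.sqrt 3 * s) := by linarith
      refine ⟨hμ, ?_⟩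
      rw [hq, hμ]; field_simp
  · rintro (⟨hμ, hq⟩ | ⟨hμ, hq⟩) <;> subst hμ <;> subst hq <;>
      constructor <;> [ring; skip; ring; skip] <;>
      · field_simp
        nlinarith [hseq, h3, h4, sq_nonneg η]
end

section
/- For a linearly full horizontal holomorphic curve ψ: S² → ℂP³ of degree d, the total ramification indices satisfy 2r₀ + r₁ = 2d − 6, where rₖ = Σ_p rₖ(p) is the sum over all higher singularities of the k-th osculating ramification indices; in particular d ≥ 3 and a curve of degree 3 has no higher singularities. -/
open Polynomial Matrix

/-- The `2×2` Wronskian-type minors of `(f, f′)`. -/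
noncomputable def wedge1 (f : Fin 4 → Polynomial ℂ) (i j : Fin 4) : Polynomial ℂ :=
  f i * derivative (f j) - f j * derivative (f i)

/-- The `3×3` minors of `(f, f′, f″)`: `wedge2 f l` is the determinant of the matrix of
`r`-th derivatives (`r = 0,1,2`) of the components of `f` other than the `l`-th. -/
noncomputable def wedge2 (f : Fin 4 → Polynomial ℂ) (l : Fin 4) : Polynomial ℂ :=
  (Matrix.of fun (r c : Fin 3) =>
    (fun p => derivative p)^[(r : ℕ)] (f (l.succAbove c))).det

/-- Sum over all finite points of the vanishing order of `f ∧ f′`. -/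
noncomputable def ord1Fin (f : Fin 4 → Polynomial ℂ) : ℕ :=
  (Finset.univ.gcd fun ij : Fin 4 × Fin 4 => wedge1 f ij.1 ij.2).natDegree

/-- Maximum degree of the components of `f ∧ f′`. -/
noncomputable def maxDeg1 (f : Fin 4 → Polynomial ℂ) : ℕ :=
  Finset.univ.sup fun ij : Fin 4 × Fin 4 => (wedge1 f ij.1 ij.2).natDegree

/-- Sum over all finite points of the vanishing order of `f ∧ f′ ∧ f″`. -/
noncomputable def ord2Fin (f : Fin 4 → Polynomial ℂ) : ℕ :=
  (Finset.univ.gcd fun l : Fin 4 => wedge2 f l).natDegree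

/-- Maximum degree of the components of `f ∧ f′ ∧ f″`. -/
noncomputable def maxDeg2 (f : Fin 4 → Polynomial ℂ) : ℕ :=
  Finset.univ.sup fun l : Fin 4 => (wedge2 f l).natDegree

/-- Total ramification index `r₀ = Σ_p r₀(p)` of a degree-`d` curve in `ℂP³`, the
total vanishing order (including at `∞`, where `f ∧ f′` is a section of `O(2d−2)`)
of `f ∧ f′`. -/
noncomputable def r0 (f : Fin 4 → Polynomial ℂ) (d : ℕ) : ℤ :=
  (ord1Fin f : ℤ) + (2 * (d : ℤ) - 2 - (maxDeg1 f : ℤ))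

/-- Total ramification index `r₁ = Σ_p r₁(p)` of the first osculating curve: the total
vanishing order of `f ∧ f′ ∧ f″` (a section of `O(3d−6)`) is `2r₀ + r₁`. -/
noncomputable def r1 (f : Fin 4 → Polynomial ℂ) (d : ℕ) : ℤ :=
  ((ord2Fin f : ℤ) + (3 * (d : ℤ) - 6 - (maxDeg2 f : ℤ))) - 2 * r0 f d

/-! ### Auxiliary lemmas -/




/-! ### Auxiliary lemmas -/

lemma deriv_zero_of_self_dvd {x : ℂ[X]} (hdvd : x ∣ derivative x) : derivative x = 0 := by
  by_contra hne
  have h1 : x.natDegree ≠ 0 := by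
    intro h0
    obtain ⟨c, hc⟩ := natDegree_eq_zero.mp h0
    rw [← hc, derivative_C] at hne; exact hne rfl
  have h2 := Polynomial.natDegree_le_of_dvd hdvd hne
  have h3 := natDegree_derivative_lt h1
  omega

lemma wronskian2_zero {u v : ℂ[X]} (hu : u ≠ 0)
    (h : u * derivative v - v * derivative u = 0) : ∃ c : ℂ, v = C c * u := by
  by_cases hv : v = 0
  · exact ⟨0, by simp [hv]⟩
  have hgne : GCDMonoid.gcd u v ≠ 0 := fun h0 => hu ((gcd_eq_zero_iff u v).mp h0).1
  have hu1 : GCDMonoid.gcd u v * (u / GCDMonoid.gcd u v) = u :=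
    EuclideanDomain.mul_div_cancel' hgne (gcd_dvd_left u v)
  have hv1 : GCDMonoid.gcd u v * (v / GCDMonoid.gcd u v) = v :=
    EuclideanDomain.mul_div_cancel' hgne (gcd_dvd_right u v)
  have hcop : IsCoprime (u / GCDMonoid.gcd u v) (v / GCDMonoid.gcd u v) :=
    isCoprime_div_gcd_div_gcd hv
  set g := GCDMonoid.gcd u v
  set u1 := u / g
  set v1 := v / g
  have hu1ne : u1 ≠ 0 := fun h0 => hu (by rw [← hu1, h0, mul_zero])
  have hv1ne : v1 ≠ 0 := fun h0 => hv (by rw [← hv1, h0, mul_zero])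
  have hred : u1 * derivative v1 - v1 * derivative u1 = 0 := by
    have hgg : g * g ≠ 0 := mul_ne_zero hgne hgne
    apply mul_left_cancel₀ hgg
    rw [mul_zero]
    have h' := h
    rw [← hu1, ← hv1] at h'
    calc g * g * (u1 * derivative v1 - v1 * derivative u1)
        = g * u1 * derivative (g * v1) - g * v1 * derivative (g * u1) := by
          simp only [derivative_mul]; ring
      _ = 0 := h'
  have hdu1 : derivative u1 = 0 :=
    deriv_zero_of_self_dvd (hcop.dvd_of_dvd_mul_left ⟨derivative v1, by linear_combination -hred⟩)
  have hdv1 : derivative v1 = 0 :=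
    deriv_zero_of_self_dvd (hcop.symm.dvd_of_dvd_mul_left
      ⟨derivative u1, by linear_combination hred⟩)
  obtain ⟨a, ha⟩ := natDegree_eq_zero.mp (natDegree_eq_zero_of_derivative_eq_zero hdu1)
  obtain ⟨b, hb⟩ := natDegree_eq_zero.mp (natDegree_eq_zero_of_derivative_eq_zero hdv1)
  have hane : a ≠ 0 := fun h0 => hu1ne (by rw [← ha, h0, map_zero])
  refine ⟨b / a, ?_⟩
  rw [← hv1, ← hb, ← hu1, ← ha]
  rw [← mul_assoc, mul_comm (C (b/a)) g, mul_assoc, ← C_mul]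
  congr 1
  field_simp

lemma wronskian3_zero {u v w : ℂ[X]}
    (h : u * (derivative v * derivative (derivative w) -
            derivative w * derivative (derivative v))
       - v * (derivative u * derivative (derivative w) -
            derivative w * derivative (derivative u))
       + w * (derivative u * derivative (derivative v) -
            derivative v * derivative (derivative u)) = 0) :
    ∃ a b c : ℂ, (a ≠ 0 ∨ b ≠ 0 ∨ c ≠ 0) ∧ C a * u + C b * v + C c * w = 0 := by
  by_cases hu : u = 0
  · exact ⟨1, 0, 0, Or.inl one_ne_zero, by simp [hu]⟩
  have hkey : (u * derivative v - v * derivative u) *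
        derivative (u * derivative w - w * derivative u) -
      (u * derivative w - w * derivative u) *
        derivative (u * derivative v - v * derivative u) = 0 := by
    simp only [derivative_sub, derivative_mul]
    linear_combination u * h
  by_cases hp : u * derivative v - v * derivative u = 0
  · obtain ⟨c, hc⟩ := wronskian2_zero hu hp
    exact ⟨c, -1, 0, Or.inr (Or.inl (by norm_num)), by simp [hc]⟩
  obtain ⟨c, hc⟩ := wronskian2_zero hp hkey
  have h2 : u * derivative (w - C c * v) - (w - C c * v) * derivative u = 0 := by
    simp only [derivative_sub, derivative_mul, derivative_C, zero_mul, zero_add]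
    linear_combination hc
  obtain ⟨a, ha⟩ := wronskian2_zero hu h2
  refine ⟨a, c, -1, Or.inr (Or.inr (by norm_num)), ?_⟩
  have hm : C (-1 : ℂ) = -1 := by simp
  rw [hm]
  linear_combination -ha

lemma wronskian_natDegree_le {p q : ℂ[X]} {d : ℕ} (hp : p.natDegree ≤ d)
    (hq : q.natDegree ≤ d) : (p * derivative q - q * derivative p).natDegree ≤ 2 * d - 2 := by
  have hW : p * derivative q - q * derivative p = wronskian p q := by rw [wronskian]; ring
  rw [hW]
  by_cases hw0 : wronskian p q = 0
  · simp [hw0]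
  have hpne : p ≠ 0 := fun h0 => hw0 (by rw [h0, wronskian_zero_left])
  have hqne : q ≠ 0 := fun h0 => hw0 (by rw [h0, wronskian_zero_right])
  by_cases hpd : p.natDegree = d
  · by_cases hqd : q.natDegree = d
    · -- both have top degree: leading terms cancel
      set c := q.leadingCoeff / p.leadingCoeff with hcdef
      have hlcp : p.leadingCoeff ≠ 0 := leadingCoeff_ne_zero.mpr hpne
      have hlcq : q.leadingCoeff ≠ 0 := leadingCoeff_ne_zero.mpr hqne
      have hcne : c ≠ 0 := div_ne_zero hlcq hlcp
      have hWeq : wronskian p q = wronskian p (q - C c * p) := by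
        rw [wronskian, wronskian]
        simp only [derivative_sub, derivative_mul, derivative_C, zero_mul, zero_add]
        ring
      by_cases hq2 : q - C c * p = 0
      · rw [hWeq, hq2, wronskian_zero_right] at hw0; exact absurd rfl hw0
      have hdlt : (q - C c * p).natDegree < d := by
        have hdeg : q.degree = (C c * p).degree := by
          rw [degree_C_mul hcne, degree_eq_natDegree hpne, degree_eq_natDegree hqne, hpd, hqd]
        have hlc : q.leadingCoeff = (C c * p).leadingCoeff := by
          rw [leadingCoeff_mul, leadingCoeff_C, hcdef, div_mul_cancel₀ _ hlcp]
        have := degree_sub_lt hdeg hqne hlc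
        have h2 := natDegree_lt_natDegree hq2 this
        omega
      rw [hWeq] at hw0 ⊢
      have h1 := natDegree_wronskian_lt_add hw0
      omega
    · have h1 := natDegree_wronskian_lt_add hw0
      omega
  · have h1 := natDegree_wronskian_lt_add hw0
    omega

lemma const_of_no_root {p : ℂ[X]} (hne : p ≠ 0) (h : ∀ z, ¬ p.IsRoot z) :
    ∃ c : ℂ, c ≠ 0 ∧ p = C c := by
  have h0 : p.natDegree = 0 := by
    by_contra h0
    obtain ⟨z, hz⟩ := Complex.exists_root (natDegree_pos_iff_degree_pos.mp (Nat.pos_of_ne_zero h0))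
    exact h z hz
  obtain ⟨c, hc⟩ := natDegree_eq_zero.mp h0
  exact ⟨c, fun h0 => hne (by rw [← hc, h0, map_zero]), hc.symm⟩

lemma deg_lower_bound {g u v h1 fi wb wc : ℂ[X]} {d M : ℕ}
    (hwb : wb = g * u) (hwc : wc = g * v)
    (hwbne : wb ≠ 0) (hwcne : wc ≠ 0)
    (hbM : wb.natDegree ≤ M) (hcM : wc.natDegree ≤ M)
    (hid : wb * derivative wc - wc * derivative wb = g * g * (h1 * (fi * fi)))
    (hh1 : h1 ≠ 0) (hfid : fi.natDegree = d) (hfine : fi ≠ 0) (hd1 : 1 ≤ d) :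
    d + g.natDegree + 1 ≤ M := by
  have hgne : g ≠ 0 := fun h0 => hwbne (by rw [hwb, h0, zero_mul])
  have hune : u ≠ 0 := fun h0 => hwbne (by rw [hwb, h0, mul_zero])
  have hvne : v ≠ 0 := fun h0 => hwcne (by rw [hwc, h0, mul_zero])
  have hred : u * derivative v - v * derivative u = h1 * (fi * fi) := by
    apply mul_left_cancel₀ (mul_ne_zero hgne hgne)
    calc g * g * (u * derivative v - v * derivative u)
        = (g * u) * derivative (g * v) - (g * v) * derivative (g * u) := by
          simp only [derivative_mul]; ring
      _ = g * g * (h1 * (fi * fi)) := by rw [← hwb, ← hwc]; exact hid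
  have hdeq : (u * derivative v - v * derivative u).natDegree = h1.natDegree + (d + d) := by
    rw [hred, natDegree_mul hh1 (mul_ne_zero hfine hfine), natDegree_mul hfine hfine, hfid]
  have hb1 : (u * derivative v).natDegree ≤ u.natDegree + (v.natDegree - 1) :=
    natDegree_mul_le.trans (Nat.add_le_add_left (natDegree_derivative_le v) _)
  have hb2 : (v * derivative u).natDegree ≤ v.natDegree + (u.natDegree - 1) :=
    natDegree_mul_le.trans (Nat.add_le_add_left (natDegree_derivative_le u) _)
  have hmax := (natDegree_sub_le (u * derivative v) (v * derivative u)).trans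
    (max_le_max hb1 hb2)
  have hsplit := le_max_iff.mp hmax
  have e1 : wb.natDegree = g.natDegree + u.natDegree := by rw [hwb, natDegree_mul hgne hune]
  have e2 : wc.natDegree = g.natDegree + v.natDegree := by rw [hwc, natDegree_mul hgne hvne]
  rw [hdeq] at hsplit
  rcases hsplit with h' | h' <;> omega

lemma wedge2_expand (f : Fin 4 → Polynomial ℂ) :
    (wedge2 f 0 =
      f 1 * (derivative (f 2) * derivative (derivative (f 3)) -
          derivative (f 3) * derivative (derivative (f 2)))
      - f 2 * (derivative (f 1) * derivative (derivative (f 3)) -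
          derivative (f 3) * derivative (derivative (f 1)))
      + f 3 * (derivative (f 1) * derivative (derivative (f 2)) -
          derivative (f 2) * derivative (derivative (f 1)))) ∧
    (wedge2 f 1 =
      f 0 * (derivative (f 2) * derivative (derivative (f 3)) -
          derivative (f 3) * derivative (derivative (f 2)))
      - f 2 * (derivative (f 0) * derivative (derivative (f 3)) -
          derivative (f 3) * derivative (derivative (f 0)))
      + f 3 * (derivative (f 0) * derivative (derivative (f 2)) -
          derivative (f 2) * derivative (derivative (f 0)))) ∧
    (wedge2 f 2 =
      f 0 * (derivative (f 1) * derivative (derivative (f 3)) -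
          derivative (f 3) * derivative (derivative (f 1)))
      - f 1 * (derivative (f 0) * derivative (derivative (f 3)) -
          derivative (f 3) * derivative (derivative (f 0)))
      + f 3 * (derivative (f 0) * derivative (derivative (f 1)) -
          derivative (f 1) * derivative (derivative (f 0)))) ∧
    (wedge2 f 3 =
      f 0 * (derivative (f 1) * derivative (derivative (f 2)) -
          derivative (f 2) * derivative (derivative (f 1)))
      - f 1 * (derivative (f 0) * derivative (derivative (f 2)) -
          derivative (f 2) * derivative (derivative (f 0)))
      + f 2 * (derivative (f 0) * derivative (derivative (f 1)) -
          derivative (f 1) * derivative (derivative (f 0)))) := by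
  refine ⟨?_, ?_, ?_, ?_⟩ <;>
  · simp [wedge2, Matrix.det_fin_three, Fin.succAbove, Fin.lt_def,
      show (Fin.succ 0 : Fin 4) = 1 from rfl, show (Fin.succ 1 : Fin 4) = 2 from rfl,
      show (Fin.succ 2 : Fin 4) = 3 from rfl, show ((3:Fin 4):ℕ) = 3 from rfl,
      show (Fin.castSucc 2 : Fin 4) = 2 from rfl]
    ring

set_option maxHeartbeats 16000000 in
/-- For a linearly full horizontal holomorphic curve of degree `d` in `ℂP³`:
`2r₀ + r₁ = 2d − 6`; in particular `d ≥ 3`, and a curve of degree 3 has no higher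
singularities. -/
theorem total_ramification_horizontal (f : Fin 4 → Polynomial ℂ) (d : ℕ)
    (hdeg : ∀ i, (f i).natDegree ≤ d)
    (htop : ∃ i, (f i).natDegree = d ∧ f i ≠ 0)
    (hnocommon : ∀ z : ℂ, ∃ i, (f i).eval z ≠ 0)
    (hfull : LinearIndependent ℂ f)
    (hhoriz : derivative (f 0) * f 1 - f 0 * derivative (f 1) +
      derivative (f 2) * f 3 - f 2 * derivative (f 3) = 0) :
    2 * r0 f d + r1 f d = 2 * (d : ℤ) - 6 ∧ 3 ≤ d ∧
      (d = 3 → r0 f d = 0 ∧ r1 f d = 0) := by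
  obtain ⟨E0, E1, E2, E3⟩ := wedge2_expand f
  -- the factor h (contact form applied to (f', f''))
  set h : ℂ[X] := derivative (f 0) * derivative (derivative (f 1))
      - derivative (f 1) * derivative (derivative (f 0))
      + derivative (f 2) * derivative (derivative (f 3))
      - derivative (f 3) * derivative (derivative (f 2)) with hhdef
  have hd' := congrArg derivative hhoriz
  simp only [derivative_add, derivative_sub, derivative_mul, derivative_zero] at hd'
  have hW0 : wedge2 f 0 = h * f 1 := by
    rw [E0, hhdef]
    linear_combination (-(derivative (derivative (f 1)))) * hhoriz + derivative (f 1) * hd'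
  have hW1 : wedge2 f 1 = h * f 0 := by
    rw [E1, hhdef]
    linear_combination (-(derivative (derivative (f 0)))) * hhoriz + derivative (f 0) * hd'
  have hW2 : wedge2 f 2 = h * f 3 := by
    rw [E2, hhdef]
    linear_combination (-(derivative (derivative (f 3)))) * hhoriz + derivative (f 3) * hd'
  have hW3 : wedge2 f 3 = h * f 2 := by
    rw [E3, hhdef]
    linear_combination (-(derivative (derivative (f 2)))) * hhoriz + derivative (f 2) * hd'
  have hfne : ∀ i, f i ≠ 0 := fun i => hfull.ne_zero i
  -- no component is a constant multiple of another
  have hpair : ∀ (i j : Fin 4), i ≠ j → ∀ c : ℂ, f j ≠ C c * f i := by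
    intro i j hij c hc
    have hsum : ∑ k : Fin 4,
        ((if k = j then (-1:ℂ) else 0) + if k = i then c else 0) • f k = 0 := by
      simp only [add_smul, ite_smul, zero_smul, Finset.sum_add_distrib, Finset.sum_ite_eq',
        Finset.mem_univ, if_true]
      rw [hc]
      simp only [smul_eq_C_mul]
      ring_nf
      simp
    have := Fintype.linearIndependent_iff.mp hfull _ hsum j
    simp only [if_pos rfl, if_neg (Ne.symm hij)] at this
    norm_num at this
  have hwne : ∀ i j, i ≠ j → wedge1 f i j ≠ 0 := by
    intro i j hij h0
    simp only [wedge1] at h0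
    obtain ⟨c, hc⟩ := wronskian2_zero (hfne i) h0
    exact hpair i j hij c hc
  -- d ≥ 1
  have hd1 : 1 ≤ d := by
    by_contra hcon
    push_neg at hcon
    interval_cases d
    obtain ⟨a, ha⟩ := natDegree_eq_zero.mp (Nat.le_zero.mp (hdeg 0))
    obtain ⟨b, hb⟩ := natDegree_eq_zero.mp (Nat.le_zero.mp (hdeg 1))
    have hane : a ≠ 0 := fun h0 => hfne 0 (by rw [← ha, h0, map_zero])
    exact hpair 0 1 (by decide) (b / a)
      (by rw [← hb, ← ha, ← C_mul, div_mul_cancel₀ _ hane])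
  -- h ≠ 0
  have hhne : h ≠ 0 := by
    intro h0
    have hz : f 1 * (derivative (f 2) * derivative (derivative (f 3)) -
          derivative (f 3) * derivative (derivative (f 2)))
      - f 2 * (derivative (f 1) * derivative (derivative (f 3)) -
          derivative (f 3) * derivative (derivative (f 1)))
      + f 3 * (derivative (f 1) * derivative (derivative (f 2)) -
          derivative (f 2) * derivative (derivative (f 1))) = 0 := by
      rw [← E0, hW0, h0, zero_mul]
    obtain ⟨a, b, c, hne, hrel⟩ := wronskian3_zero hz
    have hsum : ∑ k : Fin 4, (![0, a, b, c] k) • f k = 0 := by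
      simp only [Fin.sum_univ_four, Matrix.cons_val_zero, Matrix.cons_val_one, Matrix.head_cons,
        Matrix.cons_val_two, Matrix.tail_cons, Matrix.cons_val_three, smul_eq_C_mul, map_zero,
        zero_mul, zero_add]
      linear_combination hrel
    have := Fintype.linearIndependent_iff.mp hfull _ hsum
    rcases hne with h' | h' | h'
    · exact h' (this 1)
    · exact h' (this 2)
    · exact h' (this 3)
  -- gcd of the first wedge
  set g1 : ℂ[X] := Finset.univ.gcd (fun ij : Fin 4 × Fin 4 => wedge1 f ij.1 ij.2) with hg1def
  have hg1dvd : ∀ i j : Fin 4, g1 ∣ wedge1 f i j := fun i j =>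
    Finset.gcd_dvd (s := Finset.univ) (f := fun ij : Fin 4 × Fin 4 => wedge1 f ij.1 ij.2) (b := (i, j)) (Finset.mem_univ _)
  have hg1ne : g1 ≠ 0 := by
    intro h0
    exact hwne 0 2 (by decide)
      ((Finset.gcd_eq_zero_iff (f := fun ij : Fin 4 × Fin 4 => wedge1 f ij.1 ij.2)).mp h0
        ((0,2) : Fin 4 × Fin 4) (Finset.mem_univ _))
  -- gcd of components is a nonzero constant
  obtain ⟨c0, hc0ne, hc0⟩ : ∃ c : ℂ, c ≠ 0 ∧ Finset.univ.gcd f = C c := by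
    apply const_of_no_root
    · intro h0
      exact hfne 0 (Finset.gcd_eq_zero_iff.mp h0 0 (Finset.mem_univ 0))
    · intro z hz
      obtain ⟨i, hi⟩ := hnocommon z
      exact hi (eval_eq_zero_of_dvd_of_eval_eq_zero (Finset.gcd_dvd (Finset.mem_univ i)) hz)
  -- ord2Fin f = h.natDegree
  have hhG2 : h ∣ Finset.univ.gcd (fun l : Fin 4 => wedge2 f l) := by
    refine Finset.dvd_gcd fun l _ => ?_
    fin_cases l
    · exact ⟨f 1, hW0⟩
    · exact ⟨f 0, hW1⟩
    · exact ⟨f 3, hW2⟩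
    · exact ⟨f 2, hW3⟩
  obtain ⟨k2, hk2⟩ := hhG2
  have hk2f0 : k2 ∣ f 0 := by
    have h' : Finset.univ.gcd (fun l : Fin 4 => wedge2 f l) ∣ wedge2 f 1 :=
      Finset.gcd_dvd (Finset.mem_univ _)
    rw [hk2] at h'
    have h'' : h * k2 ∣ h * f 0 := by rw [← hW1]; exact h'
    exact (mul_dvd_mul_iff_left hhne).mp h''
  have hk2f1 : k2 ∣ f 1 := by
    have h' : Finset.univ.gcd (fun l : Fin 4 => wedge2 f l) ∣ wedge2 f 0 :=
      Finset.gcd_dvd (Finset.mem_univ _)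
    rw [hk2] at h'
    have h'' : h * k2 ∣ h * f 1 := by rw [← hW0]; exact h'
    exact (mul_dvd_mul_iff_left hhne).mp h''
  have hk2f2 : k2 ∣ f 2 := by
    have h' : Finset.univ.gcd (fun l : Fin 4 => wedge2 f l) ∣ wedge2 f 3 :=
      Finset.gcd_dvd (Finset.mem_univ _)
    rw [hk2] at h'
    have h'' : h * k2 ∣ h * f 2 := by rw [← hW3]; exact h'
    exact (mul_dvd_mul_iff_left hhne).mp h''
  have hk2f3 : k2 ∣ f 3 := by
    have h' : Finset.univ.gcd (fun l : Fin 4 => wedge2 f l) ∣ wedge2 f 2 :=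
      Finset.gcd_dvd (Finset.mem_univ _)
    rw [hk2] at h'
    have h'' : h * k2 ∣ h * f 3 := by rw [← hW2]; exact h'
    exact (mul_dvd_mul_iff_left hhne).mp h''
  have hk2u : IsUnit k2 := by
    have hk2c : k2 ∣ C c0 := by
      rw [← hc0]
      refine Finset.dvd_gcd fun i _ => ?_
      fin_cases i
      · exact hk2f0
      · exact hk2f1
      · exact hk2f2
      · exact hk2f3
    exact isUnit_of_dvd_unit hk2c (isUnit_C.mpr (isUnit_iff_ne_zero.mpr hc0ne))
  have hO2 : ord2Fin f = h.natDegree := by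
    show (Finset.univ.gcd fun l : Fin 4 => wedge2 f l).natDegree = h.natDegree
    rw [hk2, natDegree_mul hhne hk2u.ne_zero, natDegree_eq_zero_of_isUnit hk2u, add_zero]
  -- maxDeg2 f = h.natDegree + d
  have hM2 : maxDeg2 f = h.natDegree + d := by
    apply le_antisymm
    · refine Finset.sup_le fun l _ => ?_
      fin_cases l
      · show (wedge2 f 0).natDegree ≤ h.natDegree + d
        rw [hW0, natDegree_mul hhne (hfne 1)]
        exact Nat.add_le_add_left (hdeg 1) _
      · show (wedge2 f 1).natDegree ≤ h.natDegree + d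
        rw [hW1, natDegree_mul hhne (hfne 0)]
        exact Nat.add_le_add_left (hdeg 0) _
      · show (wedge2 f 2).natDegree ≤ h.natDegree + d
        rw [hW2, natDegree_mul hhne (hfne 3)]
        exact Nat.add_le_add_left (hdeg 3) _
      · show (wedge2 f 3).natDegree ≤ h.natDegree + d
        rw [hW3, natDegree_mul hhne (hfne 2)]
        exact Nat.add_le_add_left (hdeg 2) _
    · obtain ⟨i0, hi0, _⟩ := htop
      fin_cases i0
      · replace hi0 : (f 0).natDegree = d := hi0
        calc h.natDegree + d = (wedge2 f 1).natDegree := by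
              rw [hW1, natDegree_mul hhne (hfne 0), hi0]
          _ ≤ maxDeg2 f := by
              unfold maxDeg2
              exact Finset.le_sup (f := fun l : Fin 4 => (wedge2 f l).natDegree)
                (Finset.mem_univ _)
      · replace hi0 : (f 1).natDegree = d := hi0
        calc h.natDegree + d = (wedge2 f 0).natDegree := by
              rw [hW0, natDegree_mul hhne (hfne 1), hi0]
          _ ≤ maxDeg2 f := by
              unfold maxDeg2
              exact Finset.le_sup (f := fun l : Fin 4 => (wedge2 f l).natDegree)
                (Finset.mem_univ _)
      · replace hi0 : (f 2).natDegree = d := hi0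
        calc h.natDegree + d = (wedge2 f 3).natDegree := by
              rw [hW3, natDegree_mul hhne (hfne 2), hi0]
          _ ≤ maxDeg2 f := by
              unfold maxDeg2
              exact Finset.le_sup (f := fun l : Fin 4 => (wedge2 f l).natDegree)
                (Finset.mem_univ _)
      · replace hi0 : (f 3).natDegree = d := hi0
        calc h.natDegree + d = (wedge2 f 2).natDegree := by
              rw [hW2, natDegree_mul hhne (hfne 3), hi0]
          _ ≤ maxDeg2 f := by
              unfold maxDeg2
              exact Finset.le_sup (f := fun l : Fin 4 => (wedge2 f l).natDegree)
                (Finset.mem_univ _)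
  -- the Wronskian composition identities
  have hid0 : wedge1 f 0 2 * derivative (wedge1 f 0 3)
      - wedge1 f 0 3 * derivative (wedge1 f 0 2) = f 0 * wedge2 f 1 := by
    rw [E1]; simp only [wedge1, derivative_sub, derivative_mul]; ring
  have hid1 : wedge1 f 1 2 * derivative (wedge1 f 1 3)
      - wedge1 f 1 3 * derivative (wedge1 f 1 2) = f 1 * wedge2 f 0 := by
    rw [E0]; simp only [wedge1, derivative_sub, derivative_mul]; ring
  have hid2 : wedge1 f 2 0 * derivative (wedge1 f 2 1)
      - wedge1 f 2 1 * derivative (wedge1 f 2 0) = f 2 * wedge2 f 3 := by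
    rw [E3]; simp only [wedge1, derivative_sub, derivative_mul]; ring
  have hid3 : wedge1 f 3 0 * derivative (wedge1 f 3 1)
      - wedge1 f 3 1 * derivative (wedge1 f 3 0) = f 3 * wedge2 f 2 := by
    rw [E2]; simp only [wedge1, derivative_sub, derivative_mul]; ring
  -- g1² divides h
  have hsq : ∀ i : Fin 4, g1 * g1 ∣ h * (f i * f i) := by
    intro i
    fin_cases i
    · obtain ⟨u, hu⟩ := hg1dvd 0 2
      obtain ⟨v, hv⟩ := hg1dvd 0 3
      refine ⟨u * derivative v - v * derivative u, ?_⟩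
      calc h * (f 0 * f 0) = f 0 * wedge2 f 1 := by rw [hW1]; ring
        _ = wedge1 f 0 2 * derivative (wedge1 f 0 3)
            - wedge1 f 0 3 * derivative (wedge1 f 0 2) := hid0.symm
        _ = g1 * g1 * (u * derivative v - v * derivative u) := by
            rw [hu, hv]; simp only [derivative_mul]; ring
    · obtain ⟨u, hu⟩ := hg1dvd 1 2
      obtain ⟨v, hv⟩ := hg1dvd 1 3
      refine ⟨u * derivative v - v * derivative u, ?_⟩
      calc h * (f 1 * f 1) = f 1 * wedge2 f 0 := by rw [hW0]; ring
        _ = wedge1 f 1 2 * derivative (wedge1 f 1 3)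
            - wedge1 f 1 3 * derivative (wedge1 f 1 2) := hid1.symm
        _ = g1 * g1 * (u * derivative v - v * derivative u) := by
            rw [hu, hv]; simp only [derivative_mul]; ring
    · obtain ⟨u, hu⟩ := hg1dvd 2 0
      obtain ⟨v, hv⟩ := hg1dvd 2 1
      refine ⟨u * derivative v - v * derivative u, ?_⟩
      calc h * (f 2 * f 2) = f 2 * wedge2 f 3 := by rw [hW3]; ring
        _ = wedge1 f 2 0 * derivative (wedge1 f 2 1)
            - wedge1 f 2 1 * derivative (wedge1 f 2 0) := hid2.symm
        _ = g1 * g1 * (u * derivative v - v * derivative u) := by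
            rw [hu, hv]; simp only [derivative_mul]; ring
    · obtain ⟨u, hu⟩ := hg1dvd 3 0
      obtain ⟨v, hv⟩ := hg1dvd 3 1
      refine ⟨u * derivative v - v * derivative u, ?_⟩
      calc h * (f 3 * f 3) = f 3 * wedge2 f 2 := by rw [hW2]; ring
        _ = wedge1 f 3 0 * derivative (wedge1 f 3 1)
            - wedge1 f 3 1 * derivative (wedge1 f 3 0) := hid3.symm
        _ = g1 * g1 * (u * derivative v - v * derivative u) := by
            rw [hu, hv]; simp only [derivative_mul]; ring
  obtain ⟨c1, hc1ne, hc1⟩ : ∃ c : ℂ, c ≠ 0 ∧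
      Finset.univ.gcd (fun i : Fin 4 => f i * f i) = C c := by
    apply const_of_no_root
    · intro h0
      exact hfne 0 (mul_self_eq_zero.mp (Finset.gcd_eq_zero_iff.mp h0 0 (Finset.mem_univ 0)))
    · intro z hz
      obtain ⟨i, hi⟩ := hnocommon z
      have := eval_eq_zero_of_dvd_of_eval_eq_zero
        (Finset.gcd_dvd (f := fun i : Fin 4 => f i * f i) (Finset.mem_univ i)) hz
      rw [eval_mul] at this
      exact hi (mul_self_eq_zero.mp this)
  have hg2h : g1 * g1 ∣ h := by
    have hdv : g1 * g1 ∣ Finset.univ.gcd (fun i : Fin 4 => h * (f i * f i)) :=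
      Finset.dvd_gcd fun i _ => hsq i
    rw [Finset.gcd_mul_left, hc1] at hdv
    exact hdv.trans (((associated_mul_unit_left (normalize h) _
      (isUnit_C.mpr (isUnit_iff_ne_zero.mpr hc1ne))).trans (normalize_associated h)).dvd)
  obtain ⟨h1, hh1⟩ := hg2h
  have hh1ne : h1 ≠ 0 := by
    intro h0; rw [h0, mul_zero] at hh1; exact hhne hh1
  -- lower bound on maxDeg1
  have hM1ge : d + g1.natDegree + 1 ≤ maxDeg1 f := by
    obtain ⟨i0, hi0, _⟩ := htop
    fin_cases i0
    · replace hi0 : (f 0).natDegree = d := hi0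
      obtain ⟨u, hu'⟩ := hg1dvd 0 2
      obtain ⟨v, hv'⟩ := hg1dvd 0 3
      have hu : wedge1 f 0 2 = g1 * u := hu'
      have hv : wedge1 f 0 3 = g1 * v := hv'
      refine deg_lower_bound hu hv (hwne 0 2 (by decide)) (hwne 0 3 (by decide))
        ?_ ?_ ?_ hh1ne hi0 (hfne 0) hd1
      · show (wedge1 f 0 2).natDegree ≤ maxDeg1 f
        unfold maxDeg1
        exact Finset.le_sup (f := fun ij : Fin 4 × Fin 4 => (wedge1 f ij.1 ij.2).natDegree)
          (s := Finset.univ) (b := ((0,2) : Fin 4 × Fin 4)) (Finset.mem_univ _)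
      · show (wedge1 f 0 3).natDegree ≤ maxDeg1 f
        unfold maxDeg1
        exact Finset.le_sup (f := fun ij : Fin 4 × Fin 4 => (wedge1 f ij.1 ij.2).natDegree)
          (s := Finset.univ) (b := ((0,3) : Fin 4 × Fin 4)) (Finset.mem_univ _)
      · rw [hid0, hW1, hh1]; ring
    · replace hi0 : (f 1).natDegree = d := hi0
      obtain ⟨u, hu'⟩ := hg1dvd 1 2
      obtain ⟨v, hv'⟩ := hg1dvd 1 3
      have hu : wedge1 f 1 2 = g1 * u := hu'
      have hv : wedge1 f 1 3 = g1 * v := hv'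
      refine deg_lower_bound hu hv (hwne 1 2 (by decide)) (hwne 1 3 (by decide))
        ?_ ?_ ?_ hh1ne hi0 (hfne 1) hd1
      · show (wedge1 f 1 2).natDegree ≤ maxDeg1 f
        unfold maxDeg1
        exact Finset.le_sup (f := fun ij : Fin 4 × Fin 4 => (wedge1 f ij.1 ij.2).natDegree)
          (s := Finset.univ) (b := ((1,2) : Fin 4 × Fin 4)) (Finset.mem_univ _)
      · show (wedge1 f 1 3).natDegree ≤ maxDeg1 f
        unfold maxDeg1
        exact Finset.le_sup (f := fun ij : Fin 4 × Fin 4 => (wedge1 f ij.1 ij.2).natDegree)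
          (s := Finset.univ) (b := ((1,3) : Fin 4 × Fin 4)) (Finset.mem_univ _)
      · rw [hid1, hW0, hh1]; ring
    · replace hi0 : (f 2).natDegree = d := hi0
      obtain ⟨u, hu'⟩ := hg1dvd 2 0
      obtain ⟨v, hv'⟩ := hg1dvd 2 1
      have hu : wedge1 f 2 0 = g1 * u := hu'
      have hv : wedge1 f 2 1 = g1 * v := hv'
      refine deg_lower_bound hu hv (hwne 2 0 (by decide)) (hwne 2 1 (by decide))
        ?_ ?_ ?_ hh1ne hi0 (hfne 2) hd1
      · show (wedge1 f 2 0).natDegree ≤ maxDeg1 f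
        unfold maxDeg1
        exact Finset.le_sup (f := fun ij : Fin 4 × Fin 4 => (wedge1 f ij.1 ij.2).natDegree)
          (s := Finset.univ) (b := ((2,0) : Fin 4 × Fin 4)) (Finset.mem_univ _)
      · show (wedge1 f 2 1).natDegree ≤ maxDeg1 f
        unfold maxDeg1
        exact Finset.le_sup (f := fun ij : Fin 4 × Fin 4 => (wedge1 f ij.1 ij.2).natDegree)
          (s := Finset.univ) (b := ((2,1) : Fin 4 × Fin 4)) (Finset.mem_univ _)
      · rw [hid2, hW3, hh1]; ring
    · replace hi0 : (f 3).natDegree = d := hi0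
      obtain ⟨u, hu'⟩ := hg1dvd 3 0
      obtain ⟨v, hv'⟩ := hg1dvd 3 1
      have hu : wedge1 f 3 0 = g1 * u := hu'
      have hv : wedge1 f 3 1 = g1 * v := hv'
      refine deg_lower_bound hu hv (hwne 3 0 (by decide)) (hwne 3 1 (by decide))
        ?_ ?_ ?_ hh1ne hi0 (hfne 3) hd1
      · show (wedge1 f 3 0).natDegree ≤ maxDeg1 f
        unfold maxDeg1
        exact Finset.le_sup (f := fun ij : Fin 4 × Fin 4 => (wedge1 f ij.1 ij.2).natDegree)
          (s := Finset.univ) (b := ((3,0) : Fin 4 × Fin 4)) (Finset.mem_univ _)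
      · show (wedge1 f 3 1).natDegree ≤ maxDeg1 f
        unfold maxDeg1
        exact Finset.le_sup (f := fun ij : Fin 4 × Fin 4 => (wedge1 f ij.1 ij.2).natDegree)
          (s := Finset.univ) (b := ((3,1) : Fin 4 × Fin 4)) (Finset.mem_univ _)
      · rw [hid3, hW2, hh1]; ring
  -- upper bound on maxDeg1
  have hM1le : maxDeg1 f ≤ 2 * d - 2 := by
    refine Finset.sup_le fun ij _ => ?_
    exact wronskian_natDegree_le (hdeg ij.1) (hdeg ij.2)
  -- degree of h
  have hhdeg : h.natDegree = g1.natDegree + (g1.natDegree + h1.natDegree) := by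
    rw [hh1, mul_assoc, natDegree_mul hg1ne (mul_ne_zero hg1ne hh1ne),
      natDegree_mul hg1ne hh1ne]
  have hO1 : ord1Fin f = g1.natDegree := rfl
  clear_value h g1
  refine ⟨?_, ?_, fun hd3 => ⟨?_, ?_⟩⟩
  · simp only [r0, r1, hO1, hO2, hM2]; omega
  · omega
  · simp only [r0, hO1]; omega
  · simp only [r0, r1, hO1, hO2, hM2]; omega
end

section
/- The curve f(z) = (1+az, −z⁴, √2·z(1+(3/2)az), √2·z³) with a ∈ ℝ satisfies the horizontality condition f₁′f₂ − f₁f₂′ + f₃′f₄ − f₃f₄′ = 0 identically, and its higher-singularity polynomial f₁″f₂′ − f₁′f₂″ + f₃″f₄′ − f₃′f₄″ is a nonzero constant multiple of z(az+2). -/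
open Polynomial

/-- The canonical degree-4 family `Ψ̃⁴_a(z) = (1+az, −z⁴, √2·z(1+(3/2)az), √2·z³)`,
`a ∈ ℝ`, is horizontal, and its higher-singularity polynomial
`f₁″f₂′ − f₁′f₂″ + f₃″f₄′ − f₃′f₄″` is a nonzero constant multiple of `z(az+2)`. -/
theorem Psi4_horizontal_singularities (a : ℝ) :
    letI s2 : ℂ := ((Real.sqrt 2 : ℝ) : ℂ)
    letI f : Fin 4 → Polynomial ℂ :=
      ![1 + C (a : ℂ) * X,
        -(X ^ 4),
        C s2 * X * (1 + C ((3 / 2 : ℝ) * a : ℂ) * X),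
        C s2 * X ^ 3]
    (derivative (f 0) * f 1 - f 0 * derivative (f 1) +
      derivative (f 2) * f 3 - f 2 * derivative (f 3) = 0) ∧
    (∃ c : ℂ, c ≠ 0 ∧
      derivative (derivative (f 0)) * derivative (f 1) -
        derivative (f 0) * derivative (derivative (f 1)) +
        derivative (derivative (f 2)) * derivative (f 3) -
        derivative (f 2) * derivative (derivative (f 3)) =
      C c * (X * (C (a : ℂ) * X + C 2))) := by
  have hs : ((Real.sqrt 2 : ℝ) : ℂ) * ((Real.sqrt 2 : ℝ) : ℂ) = 2 := by
    norm_cast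
    exact Real.mul_self_sqrt (by norm_num)
  refine ⟨?_, -6, by norm_num, ?_⟩ <;>
  [skip; skip] <;>
  · apply Polynomial.funext
    intro x
    simp only [Matrix.cons_val_zero, Matrix.cons_val_one, Matrix.head_cons,
      Matrix.cons_val_two, Matrix.tail_cons, Matrix.cons_val_three,
      derivative_add, derivative_mul, derivative_one, derivative_C,
      derivative_X, derivative_X_pow, derivative_neg, derivative_sub,
      derivative_zero, eval_add, eval_mul, eval_sub, eval_neg, eval_pow,
      eval_C, eval_X, eval_one, eval_zero, eval_natCast, eval_ofNat,
      Complex.ofReal_mul]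
    push_cast
    first
    | linear_combination (-(2:ℂ)*x^3 - (3/2)*(a:ℂ)*x^4) * hs
    | linear_combination (-(9:ℂ)*(a:ℂ)*x^2 - 6*x) * hs
end

section
/- For the one-parameter family Ψ⁵_m(z) = (1+pz², pz³+z⁵, mz+nz³, −nz²−mz⁴) with n = 3√((3m²−5)/(m²+9)) and p = nm/3, and for m ≥ √(5/3), the horizontality condition f₁′f₂ − f₁f₂′ + f₃′f₄ − f₃f₄′ = 0 holds identically, and |Ψ⁵_m(z)|² = (1+r²)³·(2pr²cos2φ + r⁴ + (m²−3)r² + 1) in polar coordinates z = r·e^{iφ}. -/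
open Polynomial Complex

/-- Squared absolute value of a sum of two "polar form" complex numbers. -/
lemma abs_sq_two (a b θ₁ θ₂ : ℝ) :
    ‖(a:ℂ) * Complex.exp ((θ₁:ℂ)*I) + (b:ℂ)*Complex.exp ((θ₂:ℂ)*I)‖ ^ 2
      = a^2 + b^2 + 2*a*b*Real.cos (θ₁ - θ₂) := by
  rw [Complex.sq_norm, Complex.normSq_apply, Real.cos_sub]
  simp [Complex.exp_mul_I, Complex.cos_ofReal_re, Complex.sin_ofReal_re]
  nlinarith [Real.sin_sq_add_cos_sq θ₁, Real.sin_sq_add_cos_sq θ₂]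

/-- Powers of `r·e^{iφ}` in polar form. -/
lemma zpow' (r φ : ℝ) (k : ℕ) :
    ((r:ℂ)*Complex.exp ((φ:ℂ)*I))^k = ((r^k : ℝ):ℂ) * Complex.exp (((k*φ : ℝ):ℂ)*I) := by
  rw [mul_pow, ← Complex.exp_nat_mul]
  push_cast
  ring_nf

/-- For the family `Ψ⁵_m(z) = (1+pz², pz³+z⁵, mz+nz³, −nz²−mz⁴)` with
`n = 3√((3m²−5)/(m²+9))`, `p = nm/3`, `m ≥ √(5/3)`: the horizontality condition holds
identically, and `|Ψ⁵_m(z)|² = (1+r²)³(2pr²cos2φ + r⁴ + (m²−3)r² + 1)` for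
`z = r·e^{iφ}`. -/
theorem Psi5m_horizontal_norm (m n p : ℝ)
    (hm : Real.sqrt (5 / 3) ≤ m)
    (hn : n = 3 * Real.sqrt ((3 * m ^ 2 - 5) / (m ^ 2 + 9)))
    (hp : p = n * m / 3) :
    letI f : Fin 4 → Polynomial ℂ :=
      ![1 + C (p : ℂ) * X ^ 2,
        C (p : ℂ) * X ^ 3 + X ^ 5,
        C (m : ℂ) * X + C (n : ℂ) * X ^ 3,
        -(C (n : ℂ) * X ^ 2) - C (m : ℂ) * X ^ 4]
    (derivative (f 0) * f 1 - f 0 * derivative (f 1) +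
      derivative (f 2) * f 3 - f 2 * derivative (f 3) = 0) ∧
    (∀ r φ : ℝ,
      (∑ i, ‖(f i).eval ((r : ℂ) * Complex.exp (φ * Complex.I))‖ ^ 2) =
        (1 + r ^ 2) ^ 3 *
          (2 * p * r ^ 2 * Real.cos (2 * φ) + r ^ 4 + (m ^ 2 - 3) * r ^ 2 + 1)) := by
  -- basic real facts
  have hm0 : (0:ℝ) ≤ m := le_trans (Real.sqrt_nonneg _) hm
  have h35 : (0:ℝ) ≤ 3 * m ^ 2 - 5 := by
    have : (5/3 : ℝ) ≤ m ^ 2 := by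
      nlinarith [Real.sq_sqrt (show (0:ℝ) ≤ 5/3 by norm_num), Real.sqrt_nonneg (5/3 : ℝ)]
    linarith
  have hd : (0:ℝ) < m ^ 2 + 9 := by positivity
  have hn2 : n ^ 2 = 9 * ((3 * m ^ 2 - 5) / (m ^ 2 + 9)) := by
    rw [hn, mul_pow, Real.sq_sqrt (div_nonneg h35 hd.le)]; norm_num
  have h1 : n * m = 3 * p := by rw [hp]; ring
  have h2 : p ^ 2 + n ^ 2 = 3 * m ^ 2 - 5 := by
    have hpe : p ^ 2 = n ^ 2 * m ^ 2 / 9 := by rw [hp]; ring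
    rw [hpe, hn2]; field_simp
  refine ⟨?_, ?_⟩
  · -- horizontality
    have hc1 : (n:ℂ) * (m:ℂ) = 3 * (p:ℂ) := by exact_mod_cast congrArg (Complex.ofReal) h1
    have hc2 : (p:ℂ) ^ 2 + (n:ℂ) ^ 2 = 3 * (m:ℂ) ^ 2 - 5 := by
      have := congrArg (Complex.ofReal) h2; push_cast at this; exact_mod_cast h2
    have hC1 : (C (n:ℂ)) * C (m:ℂ) = 3 * C (p:ℂ) := by
      rw [← C_mul, hc1, C_mul, map_ofNat]
    have hC2 : (C (p:ℂ)) ^ 2 + (C (n:ℂ)) ^ 2 = 3 * (C (m:ℂ)) ^ 2 - 5 := by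
      rw [← C_pow, ← C_pow, ← C_add, hc2]
      simp [map_ofNat]
    simp only [Matrix.cons_val_zero, Matrix.cons_val_one, Matrix.head_cons,
      Matrix.cons_val_two, Matrix.tail_cons, Matrix.cons_val_three]
    simp only [derivative_add, derivative_sub, derivative_neg, derivative_one,
      derivative_C_mul, derivative_X_pow, derivative_X, Nat.cast_ofNat, map_ofNat]
    push_cast
    linear_combination (X^2 + X^6) * hC1 - X^4 * hC2
  · intro r φ
    rw [Fin.sum_univ_four]
    simp only [Matrix.cons_val_zero, Matrix.cons_val_one, Matrix.head_cons,
      Matrix.cons_val_two, Matrix.tail_cons, Matrix.cons_val_three,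
      eval_add, eval_sub, eval_neg, eval_mul, eval_pow, eval_C, eval_X, eval_one]
    have e0 : (1 : ℂ) + (p:ℂ) * ((r:ℂ) * Complex.exp ((φ:ℂ)*I))^2
        = ((p*r^2 : ℝ):ℂ) * Complex.exp (((2*φ : ℝ):ℂ)*I)
          + ((1 : ℝ):ℂ) * Complex.exp (((0 : ℝ):ℂ)*I) := by
      rw [zpow' r φ 2, Complex.ofReal_zero, zero_mul, Complex.exp_zero]
      push_cast; ring
    have e1 : (p:ℂ) * ((r:ℂ) * Complex.exp ((φ:ℂ)*I))^3 + ((r:ℂ) * Complex.exp ((φ:ℂ)*I))^5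
        = ((r^5 : ℝ):ℂ) * Complex.exp (((5*φ : ℝ):ℂ)*I)
          + ((p*r^3 : ℝ):ℂ) * Complex.exp (((3*φ : ℝ):ℂ)*I) := by
      rw [zpow' r φ 3, zpow' r φ 5]
      push_cast; ring
    have e2 : (m:ℂ) * ((r:ℂ) * Complex.exp ((φ:ℂ)*I)) + (n:ℂ) * ((r:ℂ) * Complex.exp ((φ:ℂ)*I))^3
        = ((n*r^3 : ℝ):ℂ) * Complex.exp (((3*φ : ℝ):ℂ)*I)
          + ((m*r : ℝ):ℂ) * Complex.exp ((φ:ℂ)*I) := by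
      rw [zpow' r φ 3]
      push_cast; ring
    have e3 : -((n:ℂ) * ((r:ℂ) * Complex.exp ((φ:ℂ)*I))^2) - (m:ℂ) * ((r:ℂ) * Complex.exp ((φ:ℂ)*I))^4
        = ((-m*r^4 : ℝ):ℂ) * Complex.exp (((4*φ : ℝ):ℂ)*I)
          + ((-n*r^2 : ℝ):ℂ) * Complex.exp (((2*φ : ℝ):ℂ)*I) := by
      rw [zpow' r φ 2, zpow' r φ 4]
      push_cast; ring
    rw [e0, e1, e2, e3, abs_sq_two, abs_sq_two, abs_sq_two, abs_sq_two]
    have c1 : Real.cos (2*φ - 0) = Real.cos (2*φ) := by norm_num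
    have c2 : Real.cos (5*φ - 3*φ) = Real.cos (2*φ) := by ring_nf
    have c3 : Real.cos (3*φ - φ) = Real.cos (2*φ) := by ring_nf
    have c4 : Real.cos (4*φ - 2*φ) = Real.cos (2*φ) := by ring_nf
    rw [c1, c2, c3, c4]
    linear_combination (2*r^4*Real.cos (2*φ) + 2*r^6*Real.cos (2*φ)) * h1
      + (r^4 + r^6) * h2
end

section
/- For positive integers k₁, k₂ with 2k₁ + k₂ = d, the curve f(z) = (1, k₂·z^(2k₁+k₂), −(2k₁+k₂)·z^(k₁), z^(k₁+k₂)) satisfies the horizontality condition f₁′f₂ − f₁f₂′ + f₃′f₄ − f₃f₄′ = 0 identically, and the zeros of its higher-singularity polynomial f₁″f₂′ − f₁′f₂″ + f₃″f₄′ − f₃′f₄″ in ℂ∖{0} are empty (all higher singularities occur at 0 or ∞). -/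
open Polynomial

lemma bw_cast_ne_zero (n : ℕ) (hn : n ≠ 0) (w : ℂ) (hw : ((n : ℕ) : ℂ) = w) :
    w ≠ 0 := by
  intro h
  exact (Nat.cast_ne_zero.mpr hn) (hw.trans h)

/-- The Bolton–Woodward canonical curve
`f(z) = (1, k₂z^(2k₁+k₂), −(2k₁+k₂)z^(k₁), z^(k₁+k₂))` with `k₁, k₂ > 0` and
`2k₁ + k₂ = d` is horizontal, and its higher-singularity polynomial has no zeros in
`ℂ ∖ {0}`: all higher singularities occur at `0` or `∞`. -/
theorem bolton_woodward_canonical (k₁ k₂ d : ℕ) (hk₁ : 0 < k₁) (hk₂ : 0 < k₂)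
    (hd : 2 * k₁ + k₂ = d) :
    letI f : Fin 4 → Polynomial ℂ :=
      ![1,
        C (k₂ : ℂ) * X ^ (2 * k₁ + k₂),
        -(C ((2 * k₁ + k₂ : ℕ) : ℂ) * X ^ k₁),
        X ^ (k₁ + k₂)]
    (derivative (f 0) * f 1 - f 0 * derivative (f 1) +
      derivative (f 2) * f 3 - f 2 * derivative (f 3) = 0) ∧
    (∀ z : ℂ, z ≠ 0 →
      (derivative (derivative (f 0)) * derivative (f 1) -
        derivative (f 0) * derivative (derivative (f 1)) +
        derivative (derivative (f 2)) * derivative (f 3) -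
        derivative (f 2) * derivative (derivative (f 3))).eval z ≠ 0) := by
  obtain ⟨a, rfl⟩ : ∃ a, k₁ = a + 1 := ⟨k₁ - 1, by omega⟩
  obtain ⟨b, rfl⟩ : ∃ b, k₂ = b + 1 := ⟨k₂ - 1, by omega⟩
  constructor
  · show _ = _
    rw [show 2*(a+1)+(b+1) = (2*a+b+2)+1 by ring, show (a+1)+(b+1) = (a+b+1)+1 by ring]
    simp only [Matrix.cons_val_zero, Matrix.cons_val_one, Matrix.head_cons,
      Matrix.cons_val_two, Matrix.cons_val_three, Matrix.tail_cons,
      derivative_one, derivative_neg, derivative_C_mul, derivative_X_pow,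
      Nat.add_sub_cancel]
    push_cast
    simp only [C_add, C_mul, C_1, map_ofNat]
    ring
  · intro z hz
    show ¬ _ = _
    rw [show 2*(a+1)+(b+1) = (2*a+b+2)+1 by ring, show (a+1)+(b+1) = (a+b+1)+1 by ring]
    simp only [Matrix.cons_val_zero, Matrix.cons_val_one, Matrix.head_cons,
      Matrix.cons_val_two, Matrix.cons_val_three, Matrix.tail_cons,
      derivative_one, derivative_neg, derivative_C_mul, derivative_X_pow,
      Nat.add_sub_cancel, derivative_zero, derivative_mul, derivative_C,
      eval_add, eval_sub, eval_mul, eval_neg, eval_pow, eval_C, eval_X,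
      zero_mul, mul_zero, zero_add, add_zero, zero_sub, sub_zero, eval_zero]
    rcases a with _ | a
    · push_cast
      have h1 : ((b:ℂ)+1) ≠ 0 := bw_cast_ne_zero (b+1) (by omega) _ (by push_cast; ring)
      have h2 : ((b:ℂ)+2) ≠ 0 := bw_cast_ne_zero (b+2) (by omega) _ (by push_cast; ring)
      have h3 : ((b:ℂ)+3) ≠ 0 := bw_cast_ne_zero (b+3) (by omega) _ (by push_cast; ring)
      rw [show -((0 + (b:ℂ) + 2 + 1) * (1 * (0 * z ^ 0))) * ((0 + ↑b + 1 + 1) * z ^ (0 + b + 1)) -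
          -((0 + ↑b + 2 + 1) * (1 * z ^ 0)) * ((0 + ↑b + 1 + 1) * ((0 + ↑b + 1) * z ^ (0 + b)))
          = (((b:ℂ)+3)*((b:ℂ)+2)*((b:ℂ)+1)) * z ^ (0+b) from by ring]
      exact mul_ne_zero (mul_ne_zero (mul_ne_zero h3 h2) h1) (pow_ne_zero _ hz)
    · push_cast
      have c1 : (2*(a:ℂ)+b+5) ≠ 0 :=
        bw_cast_ne_zero (2*a+b+5) (by omega) _ (by push_cast; ring)
      have c2 : ((a:ℂ)+2) ≠ 0 :=
        bw_cast_ne_zero (a+2) (by omega) _ (by push_cast; ring)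
      have c3 : ((a:ℂ)+b+3) ≠ 0 :=
        bw_cast_ne_zero (a+b+3) (by omega) _ (by push_cast; ring)
      have c4 : ((b:ℂ)+1) ≠ 0 :=
        bw_cast_ne_zero (b+1) (by omega) _ (by push_cast; ring)
      rw [show -((2 * ((a:ℂ) + 1) + ↑b + 2 + 1) * ((↑a + 1 + 1) * ((↑a + 1) * z ^ a))) *
            ((↑a + 1 + ↑b + 1 + 1) * z ^ (a + 1 + b + 1)) -
          -((2 * (↑a + 1) + ↑b + 2 + 1) * ((↑a + 1 + 1) * z ^ (a + 1))) *
            ((↑a + 1 + ↑b + 1 + 1) * ((↑a + 1 + ↑b + 1) * z ^ (a + 1 + b)))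
          = ((2*(a:ℂ)+b+5)*((a:ℂ)+2)*((a:ℂ)+b+3)*((b:ℂ)+1)) * (z^a*z^a*z^b*z^2) from by ring]
      exact mul_ne_zero (mul_ne_zero (mul_ne_zero (mul_ne_zero c1 c2) c3) c4)
        (mul_ne_zero (mul_ne_zero (mul_ne_zero (pow_ne_zero _ hz) (pow_ne_zero _ hz))
          (pow_ne_zero _ hz)) (pow_ne_zero _ hz))
end
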